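/- Let F be a field, d, e ≥ 0, and let M = F[ω]/(ω^{d+1}) and N = F[ω']/(ω'^{e+1}) be truncated polynomial rings. Give M ⊗_F N the structure of an F[t]-module where t acts as ω ⊗ 1 + 1 ⊗ ω'. If F has characteristic zero, then for every 0 ≤ i ≤ ⌊(d+e)/2⌋ the multiplication map t^{d+e-2i} : (M ⊗ N)_i → (M ⊗ N)_{d+e-i} between graded components is an isomorphism of F-vector spaces. -/

import Mathlib

open scoped TensorProduct
set_option synthInstance.maxHeartbeats 1000000
set_option maxHeartbeats 1000000

open Polynomial

/-- The truncated polynomial ring `F[ω]/(ω^{d+1})`. -/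
abbrev TruncPR (F : Type*) [Field F] (d : ℕ) :=
  Polynomial F ⧸ Ideal.span {(Polynomial.X : Polynomial F) ^ (d + 1)}

/-- The image of `ω` in `F[ω]/(ω^{d+1})`. -/
noncomputable def truncX (F : Type*) [Field F] (d : ℕ) : TruncPR F d :=
  Ideal.Quotient.mk _ Polynomial.X

/-- The degree-`k` graded component of `F[ω]/(ω^{d+1}) ⊗_F F[ω']/(ω'^{e+1})`,
spanned by `{ω^a ⊗ ω'^b : a + b = k, 0 ≤ a ≤ d, 0 ≤ b ≤ e}`. -/
noncomputable def gradedPiece (F : Type*) [Field F] (d e k : ℕ) :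
    Submodule F (TruncPR F d ⊗[F] TruncPR F e) :=
  Submodule.span F
    {x | ∃ a b : ℕ, a ≤ d ∧ b ≤ e ∧ a + b = k ∧ x = ((truncX F d) ^ a) ⊗ₜ[F] ((truncX F e) ^ b)}

namespace SLaux

variable (F : Type*) [Field F] (d : ℕ)

lemma truncX_pow_top : truncX F d ^ (d + 1) = 0 := by
  show (AdjoinRoot.mk ((X : F[X]) ^ (d+1)) X) ^ (d + 1) = 0
  rw [← map_pow, AdjoinRoot.mk_self]

noncomputable def trBasis : Module.Basis (Fin (d + 1)) F (TruncPR F d) :=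
  (AdjoinRoot.powerBasis' (monic_X_pow (d+1) (R := F))).basis.reindex
    (finCongr (by simp))

lemma trBasis_apply (a : Fin (d + 1)) : trBasis F d a = truncX F d ^ (a : ℕ) := by
  rw [trBasis]
  erw [Module.Basis.reindex_apply, PowerBasis.basis_eq_pow]
  rfl

noncomputable def low : TruncPR F d →ₗ[F] TruncPR F d :=
  (trBasis F d).constr F fun a =>
    (((a : ℕ) * (d + 1 - (a : ℕ)) : ℕ) : F) • truncX F d ^ ((a : ℕ) - 1)

lemma low_pow (a : ℕ) (ha : a ≤ d + 1) :
    low F d (truncX F d ^ a) =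
      ((a * (d + 1 - a) : ℕ) : F) • truncX F d ^ (a - 1) := by
  rcases eq_or_lt_of_le ha with rfl | h
  · rw [truncX_pow_top, map_zero, Nat.sub_self, Nat.mul_zero]
    simp
  · have ha' : a < d + 1 := h
    have : truncX F d ^ a = trBasis F d ⟨a, ha'⟩ := (trBasis_apply F d ⟨a, ha'⟩).symm
    rw [this, low, Module.Basis.constr_basis]

variable (e : ℕ)

noncomputable def Eop : TruncPR F d ⊗[F] TruncPR F e →ₗ[F] TruncPR F d ⊗[F] TruncPR F e :=
  LinearMap.mulLeft F
    ((truncX F d) ⊗ₜ[F] (1 : TruncPR F e) + (1 : TruncPR F d) ⊗ₜ[F] (truncX F e))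

noncomputable def Phi : TruncPR F d ⊗[F] TruncPR F e →ₗ[F] TruncPR F d ⊗[F] TruncPR F e :=
  TensorProduct.map (low F d) LinearMap.id + TensorProduct.map LinearMap.id (low F e)

instance : RightDistribClass (TruncPR F d ⊗[F] TruncPR F e) := by
  exact @Distrib.rightDistribClass (TruncPR F d ⊗[F] TruncPR F e) inferInstance

lemma Eop_tmul (a b : ℕ) :
    Eop F d e ((truncX F d ^ a) ⊗ₜ[F] (truncX F e ^ b)) =
      (truncX F d ^ (a+1)) ⊗ₜ[F] (truncX F e ^ (b))
        + (truncX F d ^ (a)) ⊗ₜ[F] (truncX F e ^ (b+1)) := by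
  rw [Eop, LinearMap.mulLeft_apply, add_mul, Algebra.TensorProduct.tmul_mul_tmul,
    Algebra.TensorProduct.tmul_mul_tmul, one_mul, one_mul, ← pow_succ', ← pow_succ']

lemma Phi_tmul (a b : ℕ) (ha : a ≤ d + 1) (hb : b ≤ e + 1) :
    Phi F d e ((truncX F d ^ a) ⊗ₜ[F] (truncX F e ^ b)) =
      ((a * (d + 1 - a) : ℕ) : F) • ((truncX F d ^ (a-1)) ⊗ₜ[F] (truncX F e ^ b))
        + ((b * (e + 1 - b) : ℕ) : F) • ((truncX F d ^ (a)) ⊗ₜ[F] (truncX F e ^ (b-1))) := by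
  rw [Phi, LinearMap.add_apply, TensorProduct.map_tmul, TensorProduct.map_tmul,
    low_pow F d a ha, low_pow F e b hb, LinearMap.id_apply, LinearMap.id_apply,
    TensorProduct.smul_tmul', TensorProduct.tmul_smul]

-- needs gradedPiece def; insert it earlier in final assembly
end SLaux

namespace SLaux
variable {F : Type*} [Field F] {d e : ℕ}

lemma mem_piece {a b k : ℕ} (ha : a ≤ d) (hb : b ≤ e) (hab : a + b = k) :
    (truncX F d ^ a) ⊗ₜ[F] (truncX F e ^ b) ∈ gradedPiece F d e k :=
  Submodule.subset_span ⟨a, b, ha, hb, hab, rfl⟩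

lemma piece_le {k : ℕ} {q : Submodule F (TruncPR F d ⊗[F] TruncPR F e)}
    (h : ∀ a b : ℕ, a ≤ d → b ≤ e → a + b = k →
      (truncX F d ^ a) ⊗ₜ[F] (truncX F e ^ b) ∈ q) :
    gradedPiece F d e k ≤ q := by
  rw [gradedPiece, Submodule.span_le]
  rintro x ⟨a, b, ha, hb, hab, rfl⟩
  exact h a b ha hb hab

lemma Eop_mem {k : ℕ} {v : TruncPR F d ⊗[F] TruncPR F e}
    (hv : v ∈ gradedPiece F d e k) : Eop F d e v ∈ gradedPiece F d e (k + 1) := by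
  revert v
  suffices h : gradedPiece F d e k ≤ (gradedPiece F d e (k + 1)).comap (Eop F d e) by
    exact fun v hv => h hv
  apply piece_le
  intro a b ha hb hab
  simp only [Submodule.mem_comap, Eop_tmul]
  apply add_mem
  · rcases eq_or_lt_of_le ha with rfl | h'
    · rw [truncX_pow_top, TensorProduct.zero_tmul]; exact zero_mem _
    · exact mem_piece h' hb (by omega)
  · rcases eq_or_lt_of_le hb with rfl | h'
    · rw [truncX_pow_top, TensorProduct.tmul_zero]; exact zero_mem _
    · exact mem_piece ha h' (by omega)

lemma Phi_mem {k : ℕ} {v : TruncPR F d ⊗[F] TruncPR F e}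
    (hv : v ∈ gradedPiece F d e (k + 1)) : Phi F d e v ∈ gradedPiece F d e k := by
  revert v
  suffices h : gradedPiece F d e (k + 1) ≤ (gradedPiece F d e k).comap (Phi F d e) by
    exact fun v hv => h hv
  apply piece_le
  intro a b ha hb hab
  simp only [Submodule.mem_comap]
  rw [Phi_tmul F d e a b (by omega) (by omega)]
  apply add_mem
  · rcases a with _ | a'
    · simp
    · exact Submodule.smul_mem _ _ (mem_piece (by omega) hb (by omega))
  · rcases b with _ | b'
    · simp
    · exact Submodule.smul_mem _ _ (mem_piece ha (by omega) (by omega))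

lemma Phi_piece_zero {v : TruncPR F d ⊗[F] TruncPR F e}
    (hv : v ∈ gradedPiece F d e 0) : Phi F d e v = 0 := by
  revert v
  suffices h : gradedPiece F d e 0 ≤ LinearMap.ker (Phi F d e) by
    exact fun v hv => h hv
  apply piece_le
  intro a b ha hb hab
  obtain ⟨rfl, rfl⟩ : a = 0 ∧ b = 0 := by omega
  simp only [LinearMap.mem_ker]
  rw [Phi_tmul F d e 0 0 (by omega) (by omega)]
  simp

lemma Eop_piece_top {v : TruncPR F d ⊗[F] TruncPR F e}
    (hv : v ∈ gradedPiece F d e (d + e)) : Eop F d e v = 0 := by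
  revert v
  suffices h : gradedPiece F d e (d + e) ≤ LinearMap.ker (Eop F d e) by
    exact fun v hv => h hv
  apply piece_le
  intro a b ha hb hab
  obtain ⟨rfl, rfl⟩ : a = d ∧ b = e := by omega
  simp only [LinearMap.mem_ker]
  rw [Eop_tmul, truncX_pow_top, truncX_pow_top]
  simp

lemma smul_predsucc_left (a : ℕ) (c : TruncPR F e) :
    ((a * (d + 1 - a) : ℕ) : F) • ((truncX F d ^ (a - 1 + 1)) ⊗ₜ[F] c)
      = ((a * (d + 1 - a) : ℕ) : F) • ((truncX F d ^ a) ⊗ₜ[F] c) := by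
  cases a with
  | zero => simp
  | succ a' => rfl

lemma smul_predsucc_right (b : ℕ) (c : TruncPR F d) :
    ((b * (e + 1 - b) : ℕ) : F) • (c ⊗ₜ[F] (truncX F e ^ (b - 1 + 1)))
      = ((b * (e + 1 - b) : ℕ) : F) • (c ⊗ₜ[F] (truncX F e ^ b)) := by
  cases b with
  | zero => simp
  | succ b' => rfl

lemma comm_piece {k : ℕ} {v : TruncPR F d ⊗[F] TruncPR F e}
    (hv : v ∈ gradedPiece F d e k) :
    Eop F d e (Phi F d e v) - Phi F d e (Eop F d e v)
      = ((2 * k : F) - ((d : F) + e)) • v := by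
  revert v
  suffices h : gradedPiece F d e k ≤ LinearMap.ker
      (Eop F d e ∘ₗ Phi F d e - Phi F d e ∘ₗ Eop F d e
        - ((2 * k : F) - ((d : F) + e)) • LinearMap.id) by
    intro v hv
    have h2 := h hv
    simp only [LinearMap.mem_ker, LinearMap.sub_apply, LinearMap.comp_apply,
      LinearMap.smul_apply, LinearMap.id_apply, sub_eq_zero] at h2
    exact h2
  apply piece_le
  intro a b ha hb hab
  simp only [LinearMap.mem_ker, LinearMap.sub_apply, LinearMap.comp_apply,
    LinearMap.smul_apply, LinearMap.id_apply, sub_eq_zero]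
  rw [Phi_tmul F d e a b (by omega) (by omega), Eop_tmul,
    map_add (Eop F d e), map_smul (Eop F d e), map_smul (Eop F d e),
    Eop_tmul, Eop_tmul, map_add (Phi F d e),
    Phi_tmul F d e (a+1) b (by omega) (by omega),
    Phi_tmul F d e a (b+1) (by omega) (by omega)]
  simp only [Nat.add_sub_cancel]
  rw [smul_add, smul_add, smul_predsucc_left, smul_predsucc_right]
  have ca : ((a * (d + 1 - a) : ℕ) : F) = a * ((d:F) + 1 - a) := by
    rw [Nat.cast_mul, Nat.cast_sub (by omega)]; push_cast; ring
  have ca' : (((a+1) * (d + 1 - (a+1)) : ℕ) : F) = ((a:F)+1) * ((d:F) - a) := by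
    rw [Nat.cast_mul, Nat.cast_sub (by omega)]; push_cast; ring
  have cb : ((b * (e + 1 - b) : ℕ) : F) = b * ((e:F) + 1 - b) := by
    rw [Nat.cast_mul, Nat.cast_sub (by omega)]; push_cast; ring
  have cb' : (((b+1) * (e + 1 - (b+1)) : ℕ) : F) = ((b:F)+1) * ((e:F) - b) := by
    rw [Nat.cast_mul, Nat.cast_sub (by omega)]; push_cast; ring
  rw [ca, ca', cb, cb']
  subst hab
  push_cast
  module

section Abstract

variable {F V : Type*} [Field F] [CharZero F] [AddCommGroup V] [Module F V]

lemma pow_succ_apply (E : V →ₗ[F] V) (m : ℕ) (v : V) :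
    (E ^ (m + 1)) v = E ((E ^ m) v) := by
  rw [pow_succ']; rfl

lemma iter_mem (P : ℕ → Submodule F V) (E : V →ₗ[F] V)
    (hE : ∀ k : ℕ, ∀ v ∈ P k, E v ∈ P (k + 1)) :
    ∀ (m k : ℕ), ∀ v ∈ P k, (E ^ m) v ∈ P (k + m) := by
  intro m
  induction m with
  | zero => intro k v hv; simpa using hv
  | succ m IH =>
    intro k v hv
    rw [pow_succ_apply, ← Nat.add_assoc]
    exact hE _ _ (IH k v hv)

lemma sl2_key (D : ℕ) (P : ℕ → Submodule F V) (E Φ : V →ₗ[F] V)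
    (hE : ∀ k : ℕ, ∀ v ∈ P k, E v ∈ P (k + 1))
    (hcomm : ∀ k ≤ D, ∀ v ∈ P k, E (Φ v) - Φ (E v) = ((2 * k : F) - (D : F)) • v) :
    ∀ (m k : ℕ), k + m ≤ D → ∀ v ∈ P k,
      Φ ((E ^ (m + 1)) v) = (E ^ (m + 1)) (Φ v)
        + (((m : F) + 1) * ((D : F) - 2 * k - m)) • (E ^ m) v := by
  intro m
  induction m with
  | zero =>
    intro k hk v hv
    have hc := hcomm k (by omega) v hv
    simp only [zero_add, pow_one, pow_zero, Module.End.one_apply, Nat.cast_zero]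
    have h1 : Φ (E v) = E (Φ v) - ((2 * k : F) - (D : F)) • v := by
      rw [← hc]; abel
    rw [h1]
    module
  | succ m IH =>
    intro k hk v hv
    have hmem : (E ^ (m + 1)) v ∈ P (k + (m + 1)) := iter_mem P E hE (m + 1) k v hv
    have hc := hcomm (k + (m + 1)) (by omega) _ hmem
    have hΦ : Φ (E ((E ^ (m + 1)) v))
        = E (Φ ((E ^ (m + 1)) v)) - ((2 * ((k : F) + (m + 1)) : F) - (D : F)) • (E ^ (m + 1)) v := by
      push_cast at hc
      rw [← hc]; abel
    rw [pow_succ_apply E (m + 1) v, hΦ, IH k (by omega) v hv, map_add, map_smul,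
      ← pow_succ_apply E (m + 1) (Φ v), ← pow_succ_apply E m v]
    push_cast
    module
    
lemma sl2_descent (D : ℕ) (P : ℕ → Submodule F V) (E Φ : V →ₗ[F] V)
    (hE : ∀ k : ℕ, ∀ v ∈ P k, E v ∈ P (k + 1))
    (hΦ : ∀ k : ℕ, 2 * (k + 1) ≤ D → ∀ v ∈ P (k + 1), Φ v ∈ P k)
    (hΦ0 : ∀ v ∈ P 0, Φ v = 0)
    (hcomm : ∀ k ≤ D, ∀ v ∈ P k, E (Φ v) - Φ (E v) = ((2 * k : F) - (D : F)) • v) :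
    ∀ k : ℕ, 2 * k ≤ D → ∀ v ∈ P k, (E ^ (D - 2 * k)) v = 0 → v = 0 := by
  intro k
  induction k using Nat.strong_induction_on with
  | _ k IHk =>
    intro hk v hv hEv
    set n := D - 2 * k with hn
    -- vanishing of higher powers
    have hpowzero : ∀ j : ℕ, n ≤ j → (E ^ j) v = 0 := by
      intro j hj
      obtain ⟨c, rfl⟩ := Nat.exists_eq_add_of_le hj
      rw [add_comm, pow_add, Module.End.mul_apply, hEv, map_zero]
    -- Step A : Φ v = 0
    have hΦv : Φ v = 0 := by
      cases k with
      | zero => exact hΦ0 v hv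
      | succ k' =>
        have h1 : Φ v ∈ P k' := hΦ k' (by omega) v hv
        have h2 : (E ^ (n + 2)) (Φ v) = 0 := by
          have hkey := sl2_key D P E Φ hE hcomm (n + 1) (k' + 1) (by omega) v hv
          rw [hpowzero (n + 1 + 1) (by omega), hpowzero (n + 1) (by omega), map_zero,
            smul_zero, add_zero] at hkey
          exact hkey.symm
        have h3 : D - 2 * k' = n + 2 := by omega
        exact IHk k' (by omega) (by omega) (Φ v) h1 (by rw [h3]; exact h2)
    -- Step B : descend
    have hdesc : ∀ m : ℕ, m ≤ n → (E ^ (n - m)) v = 0 := by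
      intro m
      induction m with
      | zero => intro _; simpa using hEv
      | succ m IHm =>
        intro hm
        have hprev : (E ^ (n - m)) v = 0 := IHm (by omega)
        set m' := n - (m + 1) with hm'
        have hsplit : n - m = m' + 1 := by omega
        have hkey := sl2_key D P E Φ hE hcomm m' k (by omega) v hv
        rw [← hsplit, hprev, hΦv, map_zero, map_zero, zero_add] at hkey
        have hcoe : ((m' : F) + 1) * ((D : F) - 2 * k - m') ≠ 0 := by
          have hD : (D : F) = 2 * (k : F) + (n : F) := by
            have hD' : (D : ℕ) = 2 * k + n := by omega
            rw [hD']; push_cast; ring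
          have hm2 : (m' : F) = (n : F) - ((m : F) + 1) := by
            rw [hm', Nat.cast_sub (by omega)]; push_cast; ring
          have hprod : ((m' : F) + 1) * ((D : F) - 2 * k - m')
              = (((n - m) * (m + 1) : ℕ) : F) := by
            rw [hD, hm2]
            push_cast [Nat.cast_sub (show m ≤ n by omega)]
            ring
          rw [hprod]
          exact Nat.cast_ne_zero.mpr (Nat.mul_ne_zero (by omega) (by omega))
        have := (smul_eq_zero.mp hkey.symm).resolve_left hcoe
        exact this
    have := hdesc n (le_refl n)
    simpa using this

end Abstract

variable {F : Type*} [Field F] {d e : ℕ}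

lemma piece_finite (k : ℕ) : FiniteDimensional F (gradedPiece F d e k) := by
  have hfin : Set.Finite {x : TruncPR F d ⊗[F] TruncPR F e |
      ∃ a b : ℕ, a ≤ d ∧ b ≤ e ∧ a + b = k ∧
        x = ((truncX F d) ^ a) ⊗ₜ[F] ((truncX F e) ^ b)} := by
    apply Set.Finite.subset ((Set.finite_Iic k).image
      (fun a => (truncX F d ^ a) ⊗ₜ[F] (truncX F e ^ (k - a))))
    rintro x ⟨a, b, ha, hb, hab, rfl⟩
    exact ⟨a, by simpa using (by omega : a ≤ k), by dsimp only; rw [show k - a = b by omega]⟩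
  exact FiniteDimensional.span_of_finite F hfin

variable [CharZero F]

lemma inj_up : ∀ k : ℕ, 2 * k ≤ d + e → ∀ v ∈ gradedPiece F d e k,
    ((Eop F d e) ^ (d + e - 2 * k)) v = 0 → v = 0 := by
  apply sl2_descent (d + e) (gradedPiece F d e) (Eop F d e) (Phi F d e)
  · exact fun k v hv => Eop_mem hv
  · exact fun k _ v hv => Phi_mem hv
  · exact fun v hv => Phi_piece_zero hv
  · intro k hk v hv
    rw [Nat.cast_add]
    exact comm_piece hv

lemma inj_down : ∀ k : ℕ, 2 * k ≤ d + e → ∀ v ∈ gradedPiece F d e (d + e - k),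
    ((Phi F d e) ^ (d + e - 2 * k)) v = 0 → v = 0 := by
  apply sl2_descent (d + e) (fun k => gradedPiece F d e (d + e - k)) (Phi F d e) (Eop F d e)
  · intro k v hv
    by_cases hk : k < d + e
    · rw [show d + e - k = (d + e - (k + 1)) + 1 by omega] at hv
      exact Phi_mem hv
    · rw [show d + e - k = 0 by omega] at hv
      rw [Phi_piece_zero hv]
      exact zero_mem _
  · intro k hk v hv
    have h1 := Eop_mem hv
    rwa [show d + e - (k + 1) + 1 = d + e - k by omega] at h1
  · intro v hv
    rw [show d + e - 0 = d + e by omega] at hv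
    exact Eop_piece_top hv
  · intro k hk v hv
    have h := comm_piece hv
    have h2 : Phi F d e (Eop F d e v) - Eop F d e (Phi F d e v)
        = -(((2 * ((d + e - k : ℕ) : F)) - ((d : F) + e)) • v) := by
      rw [← h]; abel
    rw [h2]; refine (neg_smul _ v).symm.trans ?_
    congr 1
    rw [Nat.cast_sub (by omega)]
    push_cast
    ring

lemma phi_mapsto (i : ℕ) (hi : 2 * i ≤ d + e) :
    ∀ v ∈ gradedPiece F d e (d + e - i),
      ((Phi F d e) ^ (d + e - 2 * i)) v ∈ gradedPiece F d e i := by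
  intro v hv
  have hE' : ∀ k : ℕ, ∀ v ∈ (fun k => gradedPiece F d e (d + e - k)) k,
      Phi F d e v ∈ (fun k => gradedPiece F d e (d + e - k)) (k + 1) := by
    intro k v hv
    simp only at hv ⊢
    by_cases hk : k < d + e
    · rw [show d + e - k = (d + e - (k + 1)) + 1 by omega] at hv
      exact Phi_mem hv
    · rw [show d + e - k = 0 by omega] at hv
      rw [Phi_piece_zero hv]
      exact zero_mem _
  have h1 := iter_mem (fun k => gradedPiece F d e (d + e - k)) (Phi F d e) hE'
    (d + e - 2 * i) i v hv
  simpa [show d + e - (i + (d + e - 2 * i)) = i by omega] using h1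

lemma eop_mapsto (i : ℕ) (hi : 2 * i ≤ d + e) :
    ∀ v ∈ gradedPiece F d e i,
      ((Eop F d e) ^ (d + e - 2 * i)) v ∈ gradedPiece F d e (d + e - i) := by
  intro v hv
  have h1 := iter_mem (gradedPiece F d e) (Eop F d e)
    (fun k v hv => Eop_mem hv) (d + e - 2 * i) i v hv
  rwa [show i + (d + e - 2 * i) = d + e - i by omega] at h1

end SLaux

/-- in characteristic zero, multiplication by
`t^{d+e-2i}`, where `t = ω ⊗ 1 + 1 ⊗ ω'`, is an isomorphism of `F`-vector
spaces from the degree-`i` graded component of `M ⊗ N` onto the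
degree-`(d+e-i)` graded component, for every `0 ≤ i ≤ ⌊(d+e)/2⌋`. -/
theorem trunc_tensor_strong_lefschetz
    (F : Type*) [Field F] [CharZero F] (d e : ℕ) :
    ∀ i ≤ (d + e) / 2,
      Set.BijOn
        (⇑((LinearMap.mulLeft F
            ((truncX F d) ⊗ₜ[F] (1 : TruncPR F e) + (1 : TruncPR F d) ⊗ₜ[F] (truncX F e))) ^
              (d + e - 2 * i)))
        (gradedPiece F d e i) (gradedPiece F d e (d + e - i)) := by
  intro i hi
  have hD : 2 * i ≤ d + e := by omega
  show Set.BijOn (⇑((SLaux.Eop F d e) ^ (d + e - 2 * i))) _ _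
  haveI f1 : FiniteDimensional F (gradedPiece F d e i) := SLaux.piece_finite i
  haveI f2 : FiniteDimensional F (gradedPiece F d e (d + e - i)) := SLaux.piece_finite _
  have hmaps := SLaux.eop_mapsto (F := F) (d := d) (e := e) i hD
  have hmaps2 := SLaux.phi_mapsto (F := F) (d := d) (e := e) i hD
  set n := d + e - 2 * i with hn
  let Er : gradedPiece F d e i →ₗ[F] gradedPiece F d e (d + e - i) :=
    ((SLaux.Eop F d e) ^ n).restrict hmaps
  let Pr : gradedPiece F d e (d + e - i) →ₗ[F] gradedPiece F d e i :=
    ((SLaux.Phi F d e) ^ n).restrict hmaps2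
  have hEr_inj : Function.Injective Er := by
    rw [← LinearMap.ker_eq_bot (R := F) (R₂ := F) (M := gradedPiece F d e i)
      (M₂ := gradedPiece F d e (d + e - i)) (τ₁₂ := RingHom.id F), LinearMap.ker_eq_bot']
    intro x hx
    have hx' : ((SLaux.Eop F d e) ^ n) (x : TruncPR F d ⊗[F] TruncPR F e) = 0 :=
      congrArg Subtype.val hx
    exact Subtype.ext (SLaux.inj_up (F := F) (d := d) (e := e) i hD x.1 x.2 hx')
  have hPr_inj : Function.Injective Pr := by
    rw [← LinearMap.ker_eq_bot (R := F) (R₂ := F) (M := gradedPiece F d e (d + e - i))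
      (M₂ := gradedPiece F d e i) (τ₁₂ := RingHom.id F), LinearMap.ker_eq_bot']
    intro x hx
    have hx' : ((SLaux.Phi F d e) ^ n) (x : TruncPR F d ⊗[F] TruncPR F e) = 0 :=
      congrArg Subtype.val hx
    exact Subtype.ext (SLaux.inj_down (F := F) (d := d) (e := e) i hD x.1 x.2 hx')
  have hle1 := LinearMap.finrank_le_finrank_of_injective hEr_inj
  have hle2 := LinearMap.finrank_le_finrank_of_injective hPr_inj
  have hEr_surj := (LinearMap.injective_iff_surjective_of_finrank_eq_finrank (K := F)
    (V := gradedPiece F d e i) (V₂ := gradedPiece F d e (d + e - i))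
    (le_antisymm hle1 hle2)).mp hEr_inj
  refine ⟨?_, ?_, ?_⟩
  · intro v hv
    exact hmaps v hv
  · intro x hx y hy hxy
    have h0 : ((SLaux.Eop F d e) ^ n) (x - y) = 0 := by
      rw [map_sub, hxy, sub_self]
    have := SLaux.inj_up (F := F) (d := d) (e := e) i hD (x - y) (sub_mem hx hy) h0
    exact sub_eq_zero.mp this
  · intro y hy
    obtain ⟨x, hx⟩ := hEr_surj ⟨y, hy⟩
    exact ⟨x.1, x.2, congrArg Subtype.val hx⟩
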